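/- For positive integers k and m such that (k+1) divides 2m, the strong geodetic number of the complete multipartite graph with m parts each of size k equals 2mk/(k+1). -/

import Mathlib

open SimpleGraph

/-- A selection of fixed geodesics between pairs of vertices of `S`:
each element of `P` is a walk whose endpoints lie in `S`, which is a shortest path,
with at most one walk per ordered pair of endpoints, and with the walks chosen for
the two orderings of a pair being reverses of each other. -/
def IsGeodesicSelection {V : Type*} (G : SimpleGraph V) (S : Set V)
    (P : Set ((u : V) × (v : V) × G.Walk u v)) : Prop :=
  (∀ q ∈ P, q.1 ∈ S ∧ q.2.1 ∈ S ∧ q.2.2.IsPath ∧ q.2.2.length = G.dist q.1 q.2.1) ∧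
  (∀ q ∈ P, ∀ q' ∈ P,
    (q.1 = q'.1 ∧ q.2.1 = q'.2.1 → q = q') ∧
    (q.1 = q'.2.1 ∧ q.2.1 = q'.1 → q.2.2.support = q'.2.2.support.reverse))

/-- `S` is a strong geodetic set of `G` if one can fix one shortest path between
each pair of vertices of `S` so that all vertices of `G` are covered. -/
def IsStrongGeodeticSet {V : Type*} (G : SimpleGraph V) (S : Set V) : Prop :=
  ∃ P, IsGeodesicSelection G S P ∧ ∀ w : V, ∃ q ∈ P, w ∈ q.2.2.support

/-- The strong geodetic number: minimum size of a strong geodetic set. -/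
noncomputable def strongGeodeticNumber {V : Type*} (G : SimpleGraph V) : ℕ :=
  sInf {k | ∃ S : Set V, S.ncard = k ∧ IsStrongGeodeticSet G S}

variable {m k : ℕ}

private abbrev MG (m k : ℕ) : SimpleGraph (Σ _ : Fin m, Fin k) :=
  completeMultipartiteGraph (fun _ : Fin m => Fin k)

private lemma mg_adj {u v : Σ _ : Fin m, Fin k} : (MG m k).Adj u v ↔ u.1 ≠ v.1 := Iff.rfl

private lemma mg_dist_two {u v w : Σ _ : Fin m, Fin k} (huv : u ≠ v) (h1 : u.1 = v.1)
    (hw : w.1 ≠ u.1) : (MG m k).dist u v = 2 := by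
  have hadj1 : (MG m k).Adj u w := fun h => hw h.symm
  have hadj2 : (MG m k).Adj w v := by rw [mg_adj]; rw [← h1]; exact hw
  let p : (MG m k).Walk u v := Walk.cons hadj1 (Walk.cons hadj2 Walk.nil)
  have hle : (MG m k).dist u v ≤ 2 := by simpa [p] using dist_le p
  have h0 : (MG m k).dist u v ≠ 0 := by
    have : 0 < (MG m k).dist u v := Reachable.pos_dist_of_ne ⟨p⟩ huv
    omega
  have hne1 : (MG m k).dist u v ≠ 1 := by
    intro h
    exact (dist_eq_one_iff_adj.mp h) h1
  omega

private lemma mg_mk_ne {i : Fin m} {x y : Fin k} (h : x ≠ y) :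
    (⟨i, x⟩ : Σ _ : Fin m, Fin k) ≠ ⟨i, y⟩ := by
  intro he
  apply h
  simpa using he

private lemma card_fin_lt {m a : ℕ} (ham : a ≤ m) :
    Fintype.card {i : Fin m // i.1 < a} = a := by
  calc Fintype.card {i : Fin m // i.1 < a}
      = Fintype.card (Fin a) := Fintype.card_congr
        ⟨fun s => ⟨s.1.1, s.2⟩, fun t => ⟨⟨t.1, lt_of_lt_of_le t.2 ham⟩, t.2⟩,
          fun s => rfl, fun t => rfl⟩
    _ = a := Fintype.card_fin a

private lemma card_fin_ge {m a : ℕ} (ham : a ≤ m) :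
    Fintype.card {i : Fin m // a ≤ i.1} = m - a := by
  calc Fintype.card {i : Fin m // a ≤ i.1}
      = Fintype.card (Fin (m - a)) := ?_
    _ = m - a := Fintype.card_fin _
  apply Fintype.card_congr
  refine ⟨fun s => ⟨s.1.1 - a, ?_⟩, fun t => ⟨⟨a + t.1, ?_⟩, by simp⟩, ?_, ?_⟩
  · have h1 := s.1.2
    have h2 := s.2
    omega
  · have := t.2
    omega
  · intro s
    have h2 := s.2
    apply Subtype.ext
    apply Fin.ext
    simp
    omega
  · intro t
    apply Fin.ext
    simp

private lemma pair_ext {p q : Σ y : Fin k, Fin y.1} (h1 : p.1.1 = q.1.1)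
    (h2 : p.2.1 = q.2.1) : p = q := by
  obtain ⟨⟨y, hy⟩, ⟨x, hx⟩⟩ := p
  obtain ⟨⟨y', hy'⟩, ⟨x', hx'⟩⟩ := q
  simp only at h1 h2
  subst h1
  subst h2
  rfl


section Upper

variable (m k a : ℕ)

private abbrev JT (m k a : ℕ) := {i : Fin m // a ≤ i.1} × Fin k

private abbrev PairT (k : ℕ) := Σ y : Fin k, Fin y.1

variable (ham : a ≤ m) (e : JT m k a ≃ Fin a × PairT k)

private def UU (j : JT m k a) : Σ _ : Fin m, Fin k :=
  ⟨⟨(e j).1.1, lt_of_lt_of_le (e j).1.2 ham⟩, ⟨(e j).2.2.1, lt_trans (e j).2.2.2 (e j).2.1.2⟩⟩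

private def VV (j : JT m k a) : Σ _ : Fin m, Fin k :=
  ⟨⟨(e j).1.1, lt_of_lt_of_le (e j).1.2 ham⟩, (e j).2.1⟩

private def MID (j : JT m k a) : Σ _ : Fin m, Fin k := ⟨j.1.1, j.2⟩

private lemma hUne (j : JT m k a) : UU m k a ham e j ≠ VV m k a ham e j := by
  apply mg_mk_ne
  intro h
  have := congrArg Fin.val h
  simp only [UU, VV] at this
  exact absurd this (Nat.ne_of_lt (e j).2.2.2)

private lemma hMU (j : JT m k a) : (MID m k a j).1 ≠ (UU m k a ham e j).1 := by
  intro h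
  have := congrArg Fin.val h
  simp only [MID, UU] at this
  have h1 := j.1.2
  have h2 := (e j).1.2
  omega

private lemma hMV (j : JT m k a) : (MID m k a j).1 ≠ (VV m k a ham e j).1 := by
  intro h
  have := congrArg Fin.val h
  simp only [MID, VV] at this
  have h1 := j.1.2
  have h2 := (e j).1.2
  omega

private def WW (j : JT m k a) : (MG m k).Walk (UU m k a ham e j) (VV m k a ham e j) :=
  Walk.cons (fun h => hMU m k a ham e j h.symm)
    (Walk.cons (hMV m k a ham e j) Walk.nil)

private lemma WW_support (j : JT m k a) :
    (WW m k a ham e j).support = [UU m k a ham e j, MID m k a j, VV m k a ham e j] := rfl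

private lemma WW_length (j : JT m k a) : (WW m k a ham e j).length = 2 := rfl

private lemma WW_isPath (j : JT m k a) : (WW m k a ham e j).IsPath := by
  rw [Walk.isPath_def, WW_support]
  simp only [List.nodup_cons, List.mem_cons, List.mem_singleton, List.not_mem_nil, or_false,
    List.nodup_nil, and_true, not_or]
  refine ⟨⟨?_, ?_⟩, ?_⟩
  · exact fun h => hMU m k a ham e j (congrArg Sigma.fst h).symm
  · exact hUne m k a ham e j
  · exact ⟨fun h => hMV m k a ham e j (congrArg Sigma.fst h), not_false⟩

private lemma WW_inj {j j' : JT m k a} (hU : UU m k a ham e j = UU m k a ham e j')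
    (hV : VV m k a ham e j = VV m k a ham e j') : j = j' := by
  apply e.injective
  have h1 : (e j).1.1 = (e j').1.1 := by
    have := congrArg (fun v : Σ _ : Fin m, Fin k => v.1.1) hU
    simpa [UU] using this
  have hx : (e j).2.2.1 = (e j').2.2.1 := by
    have := congrArg (fun v : Σ _ : Fin m, Fin k => v.2.1) hU
    simpa [UU] using this
  have hy : (e j).2.1.1 = (e j').2.1.1 := by
    have := congrArg (fun v : Σ _ : Fin m, Fin k => v.2.1) hV
    simpa [VV] using this
  exact Prod.ext (Fin.ext h1) (pair_ext hy hx)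

end Upper

private lemma mg_upper (hk : 0 < k) (hm : 0 < m) (hdvd : (k + 1) ∣ 2 * m) :
    ∃ S : Set (Σ _ : Fin m, Fin k), S.ncard = 2 * m * k / (k + 1) ∧
      IsStrongGeodeticSet (MG m k) S := by
  classical
  set a := 2 * m / (k + 1) with ha_def
  have haK : a * (k + 1) = 2 * m := Nat.div_mul_cancel hdvd
  have ham : a ≤ m := by
    have h2 : a * 2 ≤ a * (k + 1) := Nat.mul_le_mul_left a (by omega)
    omega
  -- cardinality equality for the matching
  have hcard : Fintype.card (JT m k a) = Fintype.card (Fin a × PairT k) := by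
    have c1 : Fintype.card (JT m k a) = (m - a) * k := by
      rw [Fintype.card_prod, card_fin_ge ham, Fintype.card_fin]
    have c2 : Fintype.card (PairT k) = ∑ i ∈ Finset.range k, i := by
      rw [Fintype.card_sigma]
      simp only [Fintype.card_fin]
      exact Fin.sum_univ_eq_sum_range (fun i => i) k
    have c3 : (∑ i ∈ Finset.range k, i) * 2 = k * (k - 1) := Finset.sum_range_id_mul_two k
    have c4 : Fintype.card (Fin a × PairT k) = a * Fintype.card (PairT k) := by
      rw [Fintype.card_prod, Fintype.card_fin]
    obtain ⟨k', rfl⟩ : ∃ k', k = k' + 1 := ⟨k - 1, by omega⟩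
    have h5 : 2 * (m - a) = a * k' := by
      have hexp : a * (k' + 1 + 1) = a * k' + 2 * a := by ring
      omega
    have key : 2 * ((m - a) * (k' + 1)) = 2 * (a * Fintype.card (PairT (k' + 1))) := by
      calc 2 * ((m - a) * (k' + 1)) = (2 * (m - a)) * (k' + 1) := by ring
        _ = (a * k') * (k' + 1) := by rw [h5]
        _ = a * ((k' + 1) * ((k' + 1) - 1)) := by simp only [Nat.add_sub_cancel]; ring
        _ = a * ((∑ i ∈ Finset.range (k' + 1), i) * 2) := by rw [c3]
        _ = 2 * (a * Fintype.card (PairT (k' + 1))) := by rw [← c2]; ring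
    omega
  set e : JT m k a ≃ Fin a × PairT k := Fintype.equivOfCardEq hcard with he_def
  set S : Set (Σ _ : Fin m, Fin k) := {v | v.1.1 < a} with hS_def
  have hUS : ∀ j : JT m k a, UU m k a ham e j ∈ S := fun j => (e j).1.2
  have hVS : ∀ j : JT m k a, VV m k a ham e j ∈ S := fun j => (e j).1.2
  have hdist : ∀ j : JT m k a,
      (MG m k).dist (UU m k a ham e j) (VV m k a ham e j) = 2 := fun j =>
    mg_dist_two (hUne m k a ham e j) rfl (hMU m k a ham e j)
  refine ⟨S, ?_, ?_⟩
  · -- cardinality of S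
    have h1 : S.ncard = a * k := by
      rw [Set.ncard_eq_toFinset_card', Set.toFinset_card]
      calc Fintype.card S
          = Fintype.card ({i : Fin m // i.1 < a} × Fin k) := Fintype.card_congr
            ⟨fun v => (⟨v.1.1, v.2⟩, v.1.2), fun p => ⟨⟨p.1.1, p.2⟩, p.1.2⟩,
              fun v => rfl, fun p => rfl⟩
        _ = a * k := by rw [Fintype.card_prod, card_fin_lt ham, Fintype.card_fin]
    rw [h1]
    have h2 : 2 * m * k = a * k * (k + 1) := by rw [← haK]; ring
    rw [h2, Nat.mul_div_cancel _ (by omega : 0 < k + 1)]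
  · -- strong geodetic
    refine ⟨{q | (∃ u, u ∈ S ∧ q = ⟨u, u, Walk.nil⟩) ∨
      (∃ j : JT m k a, q = ⟨UU m k a ham e j, VV m k a ham e j, WW m k a ham e j⟩)}, ⟨?_, ?_⟩, ?_⟩
    · rintro q (⟨u, huS, rfl⟩ | ⟨j, rfl⟩)
      · exact ⟨huS, huS, Walk.IsPath.nil, by rw [Walk.length_nil, dist_self]⟩
      · refine ⟨hUS j, hVS j, WW_isPath m k a ham e j, ?_⟩
        rw [WW_length, hdist j]
    · rintro q (⟨u, huS, rfl⟩ | ⟨j, rfl⟩) q' (⟨u', huS', rfl⟩ | ⟨j', rfl⟩)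
      · refine ⟨?_, ?_⟩ <;> (rintro ⟨h1, -⟩; subst h1)
        · rfl
        · simp
      · refine ⟨?_, ?_⟩ <;> rintro ⟨h1, h2⟩
        · exact absurd (h1.symm.trans h2) (hUne m k a ham e j')
        · exact absurd (h2.symm.trans h1) (hUne m k a ham e j')
      · refine ⟨?_, ?_⟩ <;> rintro ⟨h1, h2⟩
        · exact absurd (h1.trans h2.symm) (hUne m k a ham e j)
        · exact absurd (h1.trans h2.symm) (hUne m k a ham e j)
      · refine ⟨?_, ?_⟩
        · rintro ⟨h1, h2⟩
          have := WW_inj m k a ham e h1 h2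
          subst this
          rfl
        · rintro ⟨h1, h2⟩
          exfalso
          have e1 := congrArg (fun v : Σ _ : Fin m, Fin k => v.2.1) h1
          have e2 := congrArg (fun v : Σ _ : Fin m, Fin k => v.2.1) h2
          simp only [UU, VV] at e1 e2
          have l1 := (e j).2.2.2
          have l2 := (e j').2.2.2
          omega
    · intro w
      by_cases hw : w.1.1 < a
      · exact ⟨⟨w, w, Walk.nil⟩, Or.inl ⟨w, hw, rfl⟩, by simp⟩
      · refine ⟨_, Or.inr ⟨(⟨⟨w.1, le_of_not_gt hw⟩, w.2⟩ : JT m k a), rfl⟩, ?_⟩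
        rw [WW_support]
        have : MID m k a (⟨⟨w.1, le_of_not_gt hw⟩, w.2⟩ : JT m k a) = w := rfl
        rw [this]
        simp

private lemma mg_path_structure {u v : Σ _ : Fin m, Fin k} (p : (MG m k).Walk u v)
    (hp : p.length = (MG m k).dist u v) {w : Σ _ : Fin m, Fin k}
    (hw : w ∈ p.support) (hwu : w ≠ u) (hwv : w ≠ v) :
    u ≠ v ∧ u.1 = v.1 ∧ p.support = [u, w, v] := by
  cases p with
  | nil => simp at hw; exact absurd hw hwu
  | cons h q =>
    rename_i b
    cases q with
    | nil =>
      simp [Walk.support_cons] at hw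
      rcases hw with h1 | h2
      · exact absurd h1 hwu
      · exact absurd h2 hwv
    | cons h' q' =>
      rename_i c
      have hlen : (Walk.cons h (Walk.cons h' q')).length = q'.length + 2 := by simp
      have huv : u ≠ v := by
        rintro rfl
        rw [dist_self] at hp; omega
      have h1 : u.1 = v.1 := by
        by_contra hne
        have : (MG m k).dist u v = 1 := dist_eq_one_iff_adj.mpr hne
        omega
      have hbu : b.1 ≠ u.1 := fun hh => h hh.symm
      have hadj2 : (MG m k).Adj b v := by rw [mg_adj, ← h1]; exact hbu
      have hle : (MG m k).dist u v ≤ 2 := by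
        simpa using dist_le (Walk.cons h (Walk.cons hadj2 Walk.nil))
      have hq0 : q'.length = 0 := by omega
      cases q' with
      | nil =>
        simp [Walk.support_cons] at hw ⊢
        rcases hw with h1 | h2 | h3
        · exact absurd h1 hwu
        · exact ⟨huv, h1, h2.symm⟩
        · exact absurd h3 hwv
      | cons h'' q'' => simp at hq0

private lemma mg_lower (hk : 0 < k) (hm : 0 < m) (S : Set (Σ _ : Fin m, Fin k))
    (P : Set ((u : Σ _ : Fin m, Fin k) × (v : Σ _ : Fin m, Fin k) × (MG m k).Walk u v))
    (hsel : IsGeodesicSelection (MG m k) S P)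
    (hcov : ∀ w, ∃ q ∈ P, w ∈ q.2.2.support) :
    2 * (m * k) ≤ (k + 1) * S.ncard := by
  classical
  -- Step A: every vertex outside S is the middle of a chosen geodesic
  have hA : ∀ w : Σ _ : Fin m, Fin k, w ∉ S → ∃ (i : Fin m) (x y : Fin k), x < y ∧
      (⟨i, x⟩ : Σ _ : Fin m, Fin k) ∈ S ∧ (⟨i, y⟩ : Σ _ : Fin m, Fin k) ∈ S ∧
      ∃ q ∈ P, ((q.1 = ⟨i, x⟩ ∧ q.2.1 = ⟨i, y⟩) ∨ (q.1 = ⟨i, y⟩ ∧ q.2.1 = ⟨i, x⟩)) ∧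
        q.2.2.support = [q.1, w, q.2.1] := by
    intro w hwS
    obtain ⟨q, hqP, hwq⟩ := hcov w
    obtain ⟨hq1, hq2, _, hqlen⟩ := hsel.1 q hqP
    have hwu : w ≠ q.1 := fun h => hwS (h ▸ hq1)
    have hwv : w ≠ q.2.1 := fun h => hwS (h ▸ hq2)
    obtain ⟨hne, hfst, hsup⟩ := mg_path_structure q.2.2 hqlen hwq hwu hwv
    have e1 : q.1 = ⟨q.1.1, q.1.2⟩ := rfl
    have e2 : q.2.1 = ⟨q.1.1, q.2.1.2⟩ := by rw [hfst]
    have hxy : q.1.2 ≠ q.2.1.2 := fun h => hne (Sigma.ext hfst (heq_of_eq h))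
    rcases lt_or_gt_of_ne hxy with hlt | hgt
    · exact ⟨q.1.1, q.1.2, q.2.1.2, hlt, e1 ▸ hq1, e2 ▸ hq2, q, hqP,
        Or.inl ⟨e1, e2⟩, hsup⟩
    · exact ⟨q.1.1, q.2.1.2, q.1.2, hgt, e2 ▸ hq2, e1 ▸ hq1, q, hqP,
        Or.inr ⟨e1, e2⟩, hsup⟩
  haveI : Nonempty (Fin k) := ⟨⟨0, hk⟩⟩
  haveI : Nonempty (Fin m) := ⟨⟨0, hm⟩⟩
  haveI : Nonempty (Σ _ : Fin m, Fin k) := ⟨⟨Classical.arbitrary _, Classical.arbitrary _⟩⟩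
  haveI : Nonempty ((u : Σ _ : Fin m, Fin k) × (v : Σ _ : Fin m, Fin k) × (MG m k).Walk u v) :=
    ⟨⟨Classical.arbitrary _, Classical.arbitrary _, Walk.nil⟩⟩
  choose! I X Y hXY hXS hYS Q hQP hQor hQsup using hA
  set s : Fin m → ℕ :=
    fun i => (Finset.univ.filter fun x : Fin k => (⟨i, x⟩ : Σ _ : Fin m, Fin k) ∈ S).card
    with hs_def
  set T : Finset (Fin m × Fin k × Fin k) := Finset.univ.filter
    (fun p => p.2.1 < p.2.2 ∧ (⟨p.1, p.2.1⟩ : Σ _ : Fin m, Fin k) ∈ S ∧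
      (⟨p.1, p.2.2⟩ : Σ _ : Fin m, Fin k) ∈ S) with hT_def
  set A : Fin m → Finset (Fin k × Fin k) := fun i => Finset.univ.filter
    (fun p => p.1 < p.2 ∧ (⟨i, p.1⟩ : Σ _ : Fin m, Fin k) ∈ S ∧
      (⟨i, p.2⟩ : Σ _ : Fin m, Fin k) ∈ S) with hA_def
  -- Step C : |Sᶜ| ≤ |T|
  have hST : (Sᶜ).toFinset.card ≤ T.card := by
    apply Finset.card_le_card_of_injOn (fun w => (I w, X w, Y w))
    · intro w hw
      have hw2 : w ∉ S := by simpa using hw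
      simp only [hT_def, Finset.mem_coe, Finset.mem_filter, Finset.mem_univ, true_and]
      exact ⟨hXY w hw2, hXS w hw2, hYS w hw2⟩
    · intro w hw w' hw' heq
      have hw2 : w ∉ S := by simpa using hw
      have hw2' : w' ∉ S := by simpa using hw'
      have hI : I w = I w' := congrArg Prod.fst heq
      have hX : X w = X w' := congrArg (fun p => p.2.1) heq
      have hY : Y w = Y w' := congrArg (fun p => p.2.2) heq
      have hq := hQP w hw2
      have hq' := hQP w' hw2'
      have hpair := hsel.2 _ hq _ hq'
      have hsup := hQsup w hw2
      have hsup' := hQsup w' hw2'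
      rcases hQor w hw2 with ⟨ha, hb⟩ | ⟨ha, hb⟩ <;>
        rcases hQor w' hw2' with ⟨ha', hb'⟩ | ⟨ha', hb'⟩
      · have hqq : Q w = Q w' := hpair.1 ⟨by rw [ha, ha', hI, hX], by rw [hb, hb', hI, hY]⟩
        have hs2 : (Q w).2.2.support = (Q w').2.2.support := by rw [hqq]
        rw [hsup, hsup'] at hs2
        simp only [List.cons.injEq] at hs2
        exact hs2.2.1
      · have hrev := hpair.2 ⟨by rw [ha, hb', hI, hX], by rw [hb, ha', hI, hY]⟩
        rw [hsup, hsup'] at hrev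
        simp only [List.reverse_cons, List.cons.injEq, List.nil_append,
          List.cons_append, List.reverse_nil] at hrev
        exact hrev.2.1
      · have hrev := hpair.2 ⟨by rw [ha, hb', hI, hY], by rw [hb, ha', hI, hX]⟩
        rw [hsup, hsup'] at hrev
        simp only [List.reverse_cons, List.cons.injEq, List.nil_append,
          List.cons_append, List.reverse_nil] at hrev
        exact hrev.2.1
      · have hqq : Q w = Q w' := hpair.1 ⟨by rw [ha, ha', hI, hY], by rw [hb, hb', hI, hX]⟩
        have hs2 : (Q w).2.2.support = (Q w').2.2.support := by rw [hqq]
        rw [hsup, hsup'] at hs2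
        simp only [List.cons.injEq] at hs2
        exact hs2.2.1
  -- Step D : |T| = ∑ |A i|
  have hTsum : T.card = ∑ i : Fin m, (A i).card := by
    rw [Finset.card_eq_sum_card_fiberwise (f := fun p => p.1) (t := Finset.univ)
      (fun x _ => Finset.mem_univ _)]
    refine Finset.sum_congr rfl fun i _ => ?_
    refine Finset.card_nbij' (fun p => p.2) (fun pr => (i, pr)) ?_ ?_ ?_ ?_
    · intro p hp
      simp only [hT_def, Finset.mem_coe, Finset.mem_filter, Finset.mem_univ, true_and] at hp
      obtain ⟨⟨h1, h2, h3⟩, h4⟩ := hp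
      simp only [hA_def, Finset.mem_coe, Finset.mem_filter, Finset.mem_univ, true_and]
      rw [← h4]
      exact ⟨h1, h2, h3⟩
    · intro pr hpr
      simp only [hA_def, Finset.mem_coe, Finset.mem_filter, Finset.mem_univ, true_and] at hpr
      rw [Finset.mem_coe, Finset.mem_filter]
      refine ⟨?_, rfl⟩
      simp only [hT_def, Finset.mem_filter, Finset.mem_univ, true_and]
      exact hpr
    · intro p hp
      simp only [Finset.mem_coe, Finset.mem_filter] at hp
      rw [← hp.2]
    · intro pr _
      rfl
  -- Step E : 2|A i| ≤ s i * s i - s i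
  have hE : ∀ i : Fin m, 2 * (A i).card ≤ s i * s i - s i := by
    intro i
    set F : Finset (Fin k) :=
      Finset.univ.filter (fun x : Fin k => (⟨i, x⟩ : Σ _ : Fin m, Fin k) ∈ S) with hF_def
    have hsub : A i ⊆ F.offDiag := by
      intro p hp
      simp only [hA_def, Finset.mem_filter, Finset.mem_univ, true_and] at hp
      rw [Finset.mem_offDiag]
      exact ⟨by simp [hF_def, hp.2.1], by simp [hF_def, hp.2.2], ne_of_lt hp.1⟩
    have hsub' : (A i).image Prod.swap ⊆ F.offDiag := by
      intro p hp
      rw [Finset.mem_image] at hp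
      obtain ⟨q, hq, rfl⟩ := hp
      simp only [hA_def, Finset.mem_filter, Finset.mem_univ, true_and] at hq
      rw [Finset.mem_offDiag]
      exact ⟨by simp [hF_def, hq.2.2], by simp [hF_def, hq.2.1], (ne_of_lt hq.1).symm⟩
    have hdisj : Disjoint (A i) ((A i).image Prod.swap) := by
      rw [Finset.disjoint_left]
      intro p hp hp'
      simp only [hA_def, Finset.mem_filter, Finset.mem_univ, true_and] at hp
      rw [Finset.mem_image] at hp'
      obtain ⟨q, hq, rfl⟩ := hp'
      simp only [hA_def, Finset.mem_filter, Finset.mem_univ, true_and] at hq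
      simp only [Prod.fst_swap, Prod.snd_swap] at hp
      exact absurd (hp.1.trans hq.1) (lt_irrefl _)
    have hcard : ((A i) ∪ (A i).image Prod.swap).card ≤ F.offDiag.card :=
      Finset.card_le_card (Finset.union_subset hsub hsub')
    rw [Finset.card_union_of_disjoint hdisj,
      Finset.card_image_of_injective _ Prod.swap_injective] at hcard
    rw [Finset.offDiag_card] at hcard
    have hsF : s i = F.card := rfl
    rw [hsF, two_mul]
    exact hcard
  -- Step F : |S| = ∑ s i
  have hSsum : S.toFinset.card = ∑ i : Fin m, s i := by
    rw [Finset.card_eq_sum_card_fiberwise (f := Sigma.fst) (t := Finset.univ)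
      (fun x _ => Finset.mem_univ _)]
    refine Finset.sum_congr rfl fun i _ => ?_
    refine Finset.card_nbij' (fun v => v.2) (fun x => ⟨i, x⟩) ?_ ?_ ?_ ?_
    · intro v hv
      simp only [Finset.mem_coe, Finset.mem_filter, Set.mem_toFinset] at hv
      simp only [Finset.mem_coe, Finset.mem_filter, Finset.mem_univ, true_and]
      obtain ⟨h1, h2⟩ := hv
      have : (⟨i, v.2⟩ : Σ _ : Fin m, Fin k) = v := by rw [← h2]
      rw [this]
      exact h1
    · intro x hx
      simp only [Finset.mem_coe, Finset.mem_filter, Finset.mem_univ, true_and] at hx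
      rw [Finset.mem_coe, Finset.mem_filter]
      exact ⟨Set.mem_toFinset.mpr hx, rfl⟩
    · intro v hv
      simp only [Finset.mem_coe, Finset.mem_filter] at hv
      exact Sigma.ext hv.2.symm (heq_of_eq rfl)
    · intro x _
      rfl
  -- Step G : s i ≤ k
  have hG : ∀ i : Fin m, s i ≤ k := by
    intro i
    calc s i ≤ (Finset.univ : Finset (Fin k)).card := Finset.card_filter_le _ _
    _ = k := by simp
  -- Step H : total count
  have hH : S.toFinset.card + (Sᶜ).toFinset.card = m * k := by
    rw [Set.toFinset_compl, Finset.card_add_card_compl]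
    simp
  -- per-part inequality
  have hper : ∀ i : Fin m, 2 * (A i).card + 2 * s i ≤ s i * (k + 1) := by
    intro i
    have h1 := hE i
    have h2 : s i * s i ≤ s i * k := Nat.mul_le_mul_left _ (hG i)
    have h3 : s i ≤ s i * s i := by
      rcases Nat.eq_zero_or_pos (s i) with h | h
      · simp [h]
      · exact Nat.le_mul_of_pos_left _ h
    have h4 : s i * (k + 1) = s i * k + s i := by ring
    omega
  have hsum : ∑ i : Fin m, (2 * (A i).card + 2 * s i) ≤ ∑ i : Fin m, s i * (k + 1) :=
    Finset.sum_le_sum fun i _ => hper i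
  rw [Finset.sum_add_distrib, ← Finset.mul_sum, ← Finset.mul_sum, ← Finset.sum_mul] at hsum
  rw [← hTsum, ← hSsum] at hsum
  have hnc : S.ncard = S.toFinset.card := Set.ncard_eq_toFinset_card' S
  rw [hnc]
  linarith [hST, hsum, hH]

theorem sg_balanced_multipartite (k m : ℕ) (hk : 0 < k) (hm : 0 < m)
    (hdvd : (k + 1) ∣ 2 * m) :
    strongGeodeticNumber (SimpleGraph.completeMultipartiteGraph (fun _ : Fin m => Fin k)) =
      2 * m * k / (k + 1) := by
  obtain ⟨S, hScard, hSgeo⟩ := mg_upper hk hm hdvd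
  have hmem : 2 * m * k / (k + 1) ∈ {c | ∃ S : Set (Σ _ : Fin m, Fin k),
      S.ncard = c ∧ IsStrongGeodeticSet (MG m k) S} := ⟨S, hScard, hSgeo⟩
  rw [strongGeodeticNumber]
  apply le_antisymm
  · exact Nat.sInf_le hmem
  · apply le_csInf ⟨_, hmem⟩
    rintro c ⟨S', hc, P, hsel, hcov⟩
    have hlow := mg_lower hk hm S' P hsel hcov
    have hdvd2 : (k + 1) ∣ 2 * m * k := Dvd.dvd.mul_right hdvd k
    have hmul : 2 * m * k / (k + 1) * (k + 1) = 2 * m * k := Nat.div_mul_cancel hdvd2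
    have h2 : (k + 1) * (2 * m * k / (k + 1)) ≤ (k + 1) * c := by
      rw [Nat.mul_comm (k + 1), hmul]
      calc 2 * m * k = 2 * (m * k) := by ring
        _ ≤ (k + 1) * S'.ncard := hlow
        _ = (k + 1) * c := by rw [hc]
    exact Nat.le_of_mul_le_mul_left h2 (by omega)
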